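/- For all integers n ≥ 1, s*(n,2,1) = (n+1)·2^n. That is: if 𝓕_1, 𝓕_2 are families of subsets of [n] with |F1 ∩ F2| ≤ 1 for all F1 ∈ 𝓕_1 and F2 ∈ 𝓕_2, then |𝓕_1|·|𝓕_2| ≤ (n+1)·2^n, and this bound is attained by some such pair of families. -/
import Mathlib
open Finset

lemma sandwich {α : Type*} [DecidableEq α] {S T : Finset α} (h : S ⊆ T)
    (h1 : (T \ S).card ≤ 1) : T = S ∨ ∃ z ∈ T, z ∉ S ∧ T = insert z S := by
  interval_cases hc : (T \ S).card
  · left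
    have : T ⊆ S := Finset.sdiff_eq_empty_iff_subset.mp (Finset.card_eq_zero.mp hc)
    exact Finset.Subset.antisymm this h
  · right
    obtain ⟨z, hz⟩ := Finset.card_eq_one.mp hc
    have hzT : z ∈ T ∧ z ∉ S := by
      have : z ∈ T \ S := hz ▸ Finset.mem_singleton_self z
      exact ⟨(Finset.mem_sdiff.mp this).1, (Finset.mem_sdiff.mp this).2⟩
    refine ⟨z, hzT.1, hzT.2, ?_⟩
    ext y
    simp only [Finset.mem_insert]
    constructor
    · intro hy
      by_cases hyS : y ∈ S
      · exact Or.inr hyS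
      · left
        have : y ∈ T \ S := Finset.mem_sdiff.mpr ⟨hy, hyS⟩
        rw [hz] at this
        exact Finset.mem_singleton.mp this
    · rintro (rfl | hy)
      · exact hzT.1
      · exact h hy

/-- A family of subsets of `D` with pairwise one-sided differences of size at most 1
has at most `|D| + 1` members. -/
lemma family_bound {α : Type*} [DecidableEq α] (D : Finset α) (K : Finset (Finset α))
    (hsub : ∀ A ∈ K, A ⊆ D)
    (hpair : ∀ A ∈ K, ∀ B ∈ K, (A \ B).card ≤ 1) :
    K.card ≤ D.card + 1 := by
  classical
  by_cases hK : K.card ≤ 1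
  · omega
  push_neg at hK
  obtain ⟨K1, hK1, K2, hK2, hne⟩ := Finset.one_lt_card.mp hK
  obtain ⟨x, P, hP, hxP, Q, hQ, hxQ⟩ :
      ∃ x P, P ∈ K ∧ x ∈ P ∧ ∃ Q, Q ∈ K ∧ x ∉ Q := by
    by_cases hss : K1 ⊆ K2
    · obtain ⟨x, hx1, hx2⟩ := Finset.not_subset.mp
        (fun h => hne (Finset.Subset.antisymm hss h))
      exact ⟨x, K2, hK2, hx1, K1, hK1, hx2⟩
    · obtain ⟨x, hx1, hx2⟩ := Finset.not_subset.mp hss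
      exact ⟨x, K1, hK1, hx1, K2, hK2, hx2⟩
  set Kx := K.filter (fun A => x ∈ A) with hKxdef
  set Kc := K.filter (fun A => x ∉ A) with hKcdef
  have hsplitcard : Kx.card + Kc.card = K.card :=
    Finset.card_filter_add_card_filter_not _
  have hxne : Kx.Nonempty := ⟨P, Finset.mem_filter.mpr ⟨hP, hxP⟩⟩
  have hcne : Kc.Nonempty := ⟨Q, Finset.mem_filter.mpr ⟨hQ, hxQ⟩⟩
  have key : ∀ A ∈ Kx, ∀ B ∈ Kc, A.erase x ⊆ B := by
    intro A hA B hB y hy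
    rw [Finset.mem_erase] at hy
    have hAK : A ∈ K := (Finset.mem_filter.mp hA).1
    have hxA : x ∈ A := (Finset.mem_filter.mp hA).2
    have hBK : B ∈ K := (Finset.mem_filter.mp hB).1
    have hxB : x ∉ B := (Finset.mem_filter.mp hB).2
    by_contra hyB
    have hsub2 : ({x, y} : Finset α) ⊆ A \ B := by
      intro z hz
      rcases Finset.mem_insert.mp hz with rfl | hz
      · exact Finset.mem_sdiff.mpr ⟨hxA, hxB⟩
      · rw [Finset.mem_singleton] at hz; subst hz
        exact Finset.mem_sdiff.mpr ⟨hy.2, hyB⟩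
    have h2 : ({x, y} : Finset α).card = 2 := Finset.card_pair (Ne.symm hy.1)
    have h3 := Finset.card_le_card hsub2
    have h4 := hpair A hAK B hBK
    omega
  obtain ⟨Kb, hKb, hKbmax⟩ := Kx.exists_max_image (fun A => A.card) hxne
  obtain ⟨Ks, hKs, hKsmin⟩ := Kc.exists_min_image (fun A => A.card) hcne
  have hKbK : Kb ∈ K := (Finset.mem_filter.mp hKb).1
  have hxKb : x ∈ Kb := (Finset.mem_filter.mp hKb).2
  have hKsK : Ks ∈ K := (Finset.mem_filter.mp hKs).1
  have hxKs : x ∉ Ks := (Finset.mem_filter.mp hKs).2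
  set C := Kb.erase x with hC
  have hCD : C ⊆ D := Finset.Subset.trans (Finset.erase_subset _ _) (hsub _ hKbK)
  have hxD : x ∈ D := hsub _ hKbK hxKb
  have hxC : x ∉ C := Finset.notMem_erase _ _
  have hCcard : C.card + 1 = Kb.card := Finset.card_erase_add_one hxKb
  have hCKs : C ⊆ Ks := key Kb hKb Ks hKs
  have hCltD : C.card < D.card :=
    Finset.card_lt_card ((Finset.ssubset_iff_of_subset hCD).mpr ⟨x, hxD, hxC⟩)
  have hKcStruct : ∀ B ∈ Kc, B = C ∨ ∃ z ∈ B, z ∉ C ∧ B = insert z C := by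
    intro B hB
    have h1 : C ⊆ B := key Kb hKb B hB
    have h2 : (B \ C).card ≤ 1 := by
      have heq : B \ C = B \ Kb := by
        ext y
        simp only [hC, Finset.mem_sdiff, Finset.mem_erase]
        constructor
        · rintro ⟨hyB, hy⟩
          refine ⟨hyB, fun hyKb => hy ⟨fun hyx => ?_, hyKb⟩⟩
          subst hyx; exact (Finset.mem_filter.mp hB).2 hyB
        · rintro ⟨hyB, hy⟩; exact ⟨hyB, fun h => hy h.2⟩
      rw [heq]
      exact hpair B (Finset.mem_filter.mp hB).1 Kb hKbK
    exact sandwich h1 h2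
  have hKxStruct : ∀ A ∈ Kx, A = insert x Ks ∨ ∃ z ∈ Ks, A = insert x (Ks.erase z) := by
    intro A hA
    have h1 : A.erase x ⊆ Ks := key A hA Ks hKs
    have h2 : (Ks \ A.erase x).card ≤ 1 := by
      have heq : Ks \ A.erase x = Ks \ A := by
        ext y
        simp only [Finset.mem_sdiff, Finset.mem_erase]
        constructor
        · rintro ⟨hyKs, hy⟩
          refine ⟨hyKs, fun hyA => hy ⟨fun hyx => ?_, hyA⟩⟩
          subst hyx; exact hxKs hyKs
        · rintro ⟨hyKs, hy⟩; exact ⟨hyKs, fun h => hy h.2⟩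
      rw [heq]
      exact hpair Ks hKsK A (Finset.mem_filter.mp hA).1
    have hxA : x ∈ A := (Finset.mem_filter.mp hA).2
    rcases sandwich h1 h2 with h | ⟨z, hz, hznot, h⟩
    · left
      rw [h, Finset.insert_erase hxA]
    · right
      refine ⟨z, hz, ?_⟩
      have hzz : Ks.erase z = A.erase x := by rw [h, Finset.erase_insert hznot]
      rw [hzz, Finset.insert_erase hxA]
  have hKsle : Ks.card ≤ C.card + 1 := by
    rcases hKcStruct Ks hKs with h | ⟨z, _, hz, h⟩
    · rw [h]; omega
    · rw [h, Finset.card_insert_of_notMem hz]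
  -- bound on Kc via its structure
  have hKcImg : ∀ B ∈ Kc, B ≠ C → B ∈ ((D \ C).erase x).image (fun y => insert y C) := by
    intro B hB hBne
    rcases hKcStruct B hB with h | ⟨z, hzB, hzC, h⟩
    · exact absurd h hBne
    · refine Finset.mem_image.mpr ⟨z, ?_, h.symm⟩
      refine Finset.mem_erase.mpr ⟨?_, Finset.mem_sdiff.mpr ⟨hsub _ (Finset.mem_filter.mp hB).1 hzB, hzC⟩⟩
      intro hzx; subst hzx; exact (Finset.mem_filter.mp hB).2 hzB
  have hDCcard : ((D \ C).erase x).card = D.card - C.card - 1 := by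
    rw [Finset.card_erase_of_mem (Finset.mem_sdiff.mpr ⟨hxD, hxC⟩), Finset.card_sdiff_of_subset hCD]
  have hKxImg : ∀ A ∈ Kx, A ≠ insert x Ks → A ∈ Ks.image (fun z => insert x (Ks.erase z)) := by
    intro A hA hAne
    rcases hKxStruct A hA with h | ⟨z, hz, h⟩
    · exact absurd h hAne
    · exact Finset.mem_image.mpr ⟨z, hz, h.symm⟩
  by_cases hcase : Ks.card ≤ C.card
  · -- then Ks = C
    have hKsC : Ks = C := (Finset.eq_of_subset_of_card_le hCKs hcase).symm
    have hb1 : Kx.card ≤ Ks.card + 1 := by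
      have hsub1 : Kx ⊆ insert (insert x Ks) (Ks.image (fun z => insert x (Ks.erase z))) := by
        intro A hA
        by_cases hAe : A = insert x Ks
        · exact hAe ▸ Finset.mem_insert_self _ _
        · exact Finset.mem_insert_of_mem (hKxImg A hA hAe)
      calc Kx.card ≤ _ := Finset.card_le_card hsub1
        _ ≤ (Ks.image (fun z => insert x (Ks.erase z))).card + 1 := Finset.card_insert_le _ _
        _ ≤ Ks.card + 1 := by exact Nat.add_le_add_right (Finset.card_image_le) 1
    have hb2 : Kc.card ≤ (D.card - C.card - 1) + 1 := by
      have hsub2 : Kc ⊆ insert C (((D \ C).erase x).image (fun y => insert y C)) := by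
        intro B hB
        by_cases hBe : B = C
        · exact hBe ▸ Finset.mem_insert_self _ _
        · exact Finset.mem_insert_of_mem (hKcImg B hB hBe)
      calc Kc.card ≤ _ := Finset.card_le_card hsub2
        _ ≤ (((D \ C).erase x).image (fun y => insert y C)).card + 1 := Finset.card_insert_le _ _
        _ ≤ ((D \ C).erase x).card + 1 := Nat.add_le_add_right (Finset.card_image_le) 1
        _ = (D.card - C.card - 1) + 1 := by rw [hDCcard]
    rw [hKsC] at hb1
    omega
  · have hKscard : Ks.card = C.card + 1 := by omega
    have hb1 : Kx.card ≤ Ks.card := by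
      have hsub1 : Kx ⊆ Ks.image (fun z => insert x (Ks.erase z)) := by
        intro A hA
        refine hKxImg A hA ?_
        intro hAe
        have h1 : A.card ≤ Kb.card := hKbmax A hA
        have h2 : A.card = Ks.card + 1 := by
          rw [hAe, Finset.card_insert_of_notMem hxKs]
        omega
      calc Kx.card ≤ _ := Finset.card_le_card hsub1
        _ ≤ Ks.card := Finset.card_image_le
    have hb2 : Kc.card ≤ D.card - C.card - 1 := by
      have hsub2 : Kc ⊆ ((D \ C).erase x).image (fun y => insert y C) := by
        intro B hB
        refine hKcImg B hB ?_
        intro hBe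
        have h1 : Ks.card ≤ B.card := hKsmin B hB
        rw [hBe] at h1
        omega
      calc Kc.card ≤ _ := Finset.card_le_card hsub2
        _ ≤ ((D \ C).erase x).card := Finset.card_image_le
        _ = D.card - C.card - 1 := hDCcard
    omega
lemma fiber_bound {n : ℕ} (F1 F2 : Finset (Finset (Fin n)))
    (hcross : ∀ A ∈ F1, ∀ B ∈ F2, (A ∩ B).card ≤ 1) (D : Finset (Fin n)) :
    ((F1 ×ˢ F2).filter (fun p => p.1 \ p.2 ∪ p.2 \ p.1 = D)).card ≤ n + 1 := by
  classical
  set T := (F1 ×ˢ F2).filter (fun p => p.1 \ p.2 ∪ p.2 \ p.1 = D) with hT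
  have hmem : ∀ p ∈ T, p.1 ∈ F1 ∧ p.2 ∈ F2 ∧ p.1 \ p.2 ∪ p.2 \ p.1 = D := by
    intro p hp
    rw [hT, Finset.mem_filter, Finset.mem_product] at hp
    exact ⟨hp.1.1, hp.1.2, hp.2⟩
  have hin2 : ∀ p ∈ T, ∀ y ∈ D, y ∉ p.1 → y ∈ p.2 := by
    intro p hp y hyD hy1
    rw [← (hmem p hp).2.2] at hyD
    rcases Finset.mem_union.mp hyD with h | h
    · exact absurd (Finset.mem_sdiff.mp h).1 hy1
    · exact (Finset.mem_sdiff.mp h).1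
  have hsubD : ∀ p ∈ T, ∀ y, y ∈ p.1 → y ∉ p.2 → y ∈ D := by
    intro p hp y hy1 hy2
    rw [← (hmem p hp).2.2]
    exact Finset.mem_union_left _ (Finset.mem_sdiff.mpr ⟨hy1, hy2⟩)
  have hsubD2 : ∀ p ∈ T, ∀ y, y ∈ p.2 → y ∉ p.1 → y ∈ D := by
    intro p hp y hy2 hy1
    rw [← (hmem p hp).2.2]
    exact Finset.mem_union_right _ (Finset.mem_sdiff.mpr ⟨hy2, hy1⟩)
  have hnotD : ∀ p ∈ T, ∀ y, y ∈ p.1 → y ∈ p.2 → y ∉ D := by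
    intro p hp y hy1 hy2 hyD
    rw [← (hmem p hp).2.2] at hyD
    rcases Finset.mem_union.mp hyD with h | h
    · exact (Finset.mem_sdiff.mp h).2 hy2
    · exact (Finset.mem_sdiff.mp h).2 hy1
  have hpairc : ∀ p ∈ T, ∀ q ∈ T, ∀ y m : Fin n, y ≠ m →
      y ∈ p.1 → m ∈ p.1 → y ∈ q.2 → m ∈ q.2 → False := by
    intro p hp q hq y m hne hy1 hm1 hy2 hm2
    have hsub2 : ({y, m} : Finset (Fin n)) ⊆ p.1 ∩ q.2 := by
      intro z hz
      rcases Finset.mem_insert.mp hz with rfl | hz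
      · exact Finset.mem_inter.mpr ⟨hy1, hy2⟩
      · rw [Finset.mem_singleton] at hz; subst hz
        exact Finset.mem_inter.mpr ⟨hm1, hm2⟩
    have h2 : ({y, m} : Finset (Fin n)).card = 2 := Finset.card_pair hne
    have h3 := Finset.card_le_card hsub2
    have h4 := hcross p.1 (hmem p hp).1 q.2 (hmem q hq).2.1
    omega
  have hmono : ∀ p ∈ T, ∀ q ∈ T, ∀ m, m ∈ p.1 → m ∈ p.2 → m ∈ q.1 → m ∈ q.2 →
      p.1 \ p.2 ⊆ q.1 \ q.2 := by
    intro p hp q hq m hmp1 hmp2 hmq1 hmq2 y hy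
    rw [Finset.mem_sdiff] at hy
    have hyD : y ∈ D := hsubD p hp y hy.1 hy.2
    have hmD : m ∉ D := hnotD p hp m hmp1 hmp2
    have hym : y ≠ m := fun h => hmD (h ▸ hyD)
    by_contra hnot
    have hyq2 : y ∈ q.2 := by
      by_cases h : y ∈ q.1
      · by_contra h2
        exact hnot (Finset.mem_sdiff.mpr ⟨h, h2⟩)
      · exact hin2 q hq y hyD h
    exact hpairc p hp q hq y m hym hy.1 hmp1 hyq2 hmq2
  have ep2 : ∀ p ∈ T, p.2 = (D \ (p.1 \ p.2)) ∪ (p.1 ∩ p.2) := by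
    intro p hp
    ext y
    simp only [Finset.mem_union, Finset.mem_sdiff, Finset.mem_inter]
    constructor
    · intro hy
      by_cases h : y ∈ p.1
      · exact Or.inr ⟨h, hy⟩
      · exact Or.inl ⟨hsubD2 p hp y hy h, fun hc => h hc.1⟩
    · rintro (⟨hyD, hy⟩ | ⟨hy1, hy2⟩)
      · by_cases h : y ∈ p.1
        · by_contra h2
          exact hy ⟨h, h2⟩
        · exact hin2 p hp y hyD h
      · exact hy2
  have hdet : ∀ p ∈ T, ∀ q ∈ T, p.1 \ p.2 = q.1 \ q.2 → p.1 ∩ p.2 = q.1 ∩ q.2 → p = q := by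
    intro p hp q hq h1 h2
    have e1 : p.1 = q.1 := by
      have ep : p.1 = (p.1 \ p.2) ∪ (p.1 ∩ p.2) := by
        ext y
        simp only [Finset.mem_union, Finset.mem_sdiff, Finset.mem_inter]
        tauto
      have eq' : q.1 = (q.1 \ q.2) ∪ (q.1 ∩ q.2) := by
        ext y
        simp only [Finset.mem_union, Finset.mem_sdiff, Finset.mem_inter]
        tauto
      rw [ep, eq', h1, h2]
    have e2 : p.2 = q.2 := by
      rw [ep2 p hp, ep2 q hq, h1, h2]
    exact Prod.ext e1 e2
  -- split the fiber according to whether the intersection is empty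
  set S0 := T.filter (fun p => p.1 ∩ p.2 = ∅) with hS0
  set S1 := T.filter (fun p => ¬(p.1 ∩ p.2 = ∅)) with hS1
  have hsplit : S0.card + S1.card = T.card :=
    Finset.card_filter_add_card_filter_not _
  have hS0T : ∀ p ∈ S0, p ∈ T ∧ p.1 ∩ p.2 = ∅ := fun p hp => Finset.mem_filter.mp hp
  have hS1T : ∀ p ∈ S1, p ∈ T ∧ p.1 ∩ p.2 ≠ ∅ := fun p hp => Finset.mem_filter.mp hp
  have hdiffeq : ∀ p ∈ S0, p.1 \ p.2 = p.1 := by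
    intro p hp
    ext y
    simp only [Finset.mem_sdiff]
    constructor
    · exact fun h => h.1
    · intro hy
      refine ⟨hy, fun hy2 => ?_⟩
      have := (hS0T p hp).2
      exact absurd (Finset.mem_inter.mpr ⟨hy, hy2⟩) (by rw [this]; simp)
  -- bound on S0 via the family bound
  have hS0card : S0.card ≤ D.card + 1 := by
    have hinj : Set.InjOn Prod.fst (S0 : Set (Finset (Fin n) × Finset (Fin n))) := by
      intro p hp q hq h
      rw [Finset.mem_coe] at hp hq
      apply hdet p (hS0T p hp).1 q (hS0T q hq).1
      · rw [hdiffeq p hp, hdiffeq q hq]; exact h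
      · rw [(hS0T p hp).2, (hS0T q hq).2]
    have hcardeq : (S0.image Prod.fst).card = S0.card := Finset.card_image_of_injOn hinj
    rw [← hcardeq]
    apply family_bound D
    · intro A hA
      obtain ⟨p, hp, rfl⟩ := Finset.mem_image.mp hA
      intro y hy
      have hy2 : y ∉ p.2 := by
        intro hc
        have := (hS0T p hp).2
        exact absurd (Finset.mem_inter.mpr ⟨hy, hc⟩) (by rw [this]; simp)
      exact hsubD p (hS0T p hp).1 y hy hy2
    · intro A hA B hB
      obtain ⟨p, hp, rfl⟩ := Finset.mem_image.mp hA
      obtain ⟨q, hq, rfl⟩ := Finset.mem_image.mp hB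
      have hsubi : p.1 \ q.1 ⊆ p.1 ∩ q.2 := by
        intro y hy
        rw [Finset.mem_sdiff] at hy
        have hy2 : y ∉ p.2 := by
          intro hc
          have := (hS0T p hp).2
          exact absurd (Finset.mem_inter.mpr ⟨hy.1, hc⟩) (by rw [this]; simp)
        have hyD : y ∈ D := hsubD p (hS0T p hp).1 y hy.1 hy2
        have hyq2 : y ∈ q.2 := hin2 q (hS0T q hq).1 y hyD hy.2
        exact Finset.mem_inter.mpr ⟨hy.1, hyq2⟩
      exact le_trans (Finset.card_le_card hsubi)
        (hcross p.1 (hmem p (hS0T p hp).1).1 q.2 (hmem q (hS0T q hq).1).2.1)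
  -- bound on S1 via the marker injection
  have hS1card : S1.card ≤ n - D.card := by
    have hm1 : ∀ p ∈ S1, ∃ m, p.1 ∩ p.2 = {m} := by
      intro p hp
      have h1 := hcross p.1 (hmem p (hS1T p hp).1).1 p.2 (hmem p (hS1T p hp).1).2.1
      have h2 : (p.1 ∩ p.2).Nonempty := Finset.nonempty_iff_ne_empty.mpr (hS1T p hp).2
      have h3 : (p.1 ∩ p.2).card = 1 := le_antisymm h1 (Finset.card_pos.mpr h2)
      exact Finset.card_eq_one.mp h3
    have hbnd := Finset.card_le_card_of_injOn (fun p => p.1 ∩ p.2)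
      (t := ((Finset.univ : Finset (Fin n)) \ D).image (fun m => ({m} : Finset (Fin n))))
      (s := S1) ?_ ?_
    · have h2 : (((Finset.univ : Finset (Fin n)) \ D).image
          (fun m => ({m} : Finset (Fin n)))).card ≤ n - D.card := by
        calc _ ≤ ((Finset.univ : Finset (Fin n)) \ D).card := Finset.card_image_le
          _ = n - D.card := by
            rw [Finset.card_sdiff_of_subset (Finset.subset_univ D), Finset.card_univ, Fintype.card_fin]
      omega
    · intro p hp
      obtain ⟨m, hm⟩ := hm1 p hp
      have hmm : m ∈ p.1 ∩ p.2 := by rw [hm]; simp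
      have hmD : m ∉ D := hnotD p (hS1T p hp).1 m (Finset.mem_inter.mp hmm).1
        (Finset.mem_inter.mp hmm).2
      exact Finset.mem_image.mpr ⟨m, Finset.mem_sdiff.mpr ⟨Finset.mem_univ m, hmD⟩, hm.symm⟩
    · intro p hp q hq h
      rw [Finset.mem_coe] at hp hq
      simp only at h
      obtain ⟨m, hm⟩ := hm1 p hp
      have hmp : m ∈ p.1 ∩ p.2 := by rw [hm]; simp
      have hmq : m ∈ q.1 ∩ q.2 := by rw [← h, hm]; simp
      apply hdet p (hS1T p hp).1 q (hS1T q hq).1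
      · exact Finset.Subset.antisymm
          (hmono p (hS1T p hp).1 q (hS1T q hq).1 m (Finset.mem_inter.mp hmp).1
            (Finset.mem_inter.mp hmp).2 (Finset.mem_inter.mp hmq).1 (Finset.mem_inter.mp hmq).2)
          (hmono q (hS1T q hq).1 p (hS1T p hp).1 m (Finset.mem_inter.mp hmq).1
            (Finset.mem_inter.mp hmq).2 (Finset.mem_inter.mp hmp).1 (Finset.mem_inter.mp hmp).2)
      · exact h
  have hDn : D.card ≤ n := by
    have := Finset.card_le_univ D
    simpa using this
  omega

/-- For `n ≥ 1`, `s*(n,2,1) = (n+1)·2^n`: the product `|𝓕_1|·|𝓕_2|`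
of two families of subsets of `[n]` all of whose cross-intersections have size at
most `1` is at most `(n+1)·2^n`, and this bound is attained. -/
theorem sStar_two_families_one (n : ℕ) (hn : 1 ≤ n) :
    IsGreatest
      {P : ℕ | ∃ F1 F2 : Finset (Finset (Fin n)),
        (∀ A ∈ F1, ∀ B ∈ F2, (A ∩ B).card ≤ 1) ∧
        P = F1.card * F2.card}
      ((n + 1) * 2 ^ n) := by
  classical
  constructor
  · refine ⟨insert ∅ (Finset.univ.image fun i => ({i} : Finset (Fin n))),
      (Finset.univ : Finset (Fin n)).powerset, ?_, ?_⟩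
    · intro A hA B hB
      have hA1 : A.card ≤ 1 := by
        rcases Finset.mem_insert.mp hA with rfl | hA
        · simp
        · obtain ⟨i, -, rfl⟩ := Finset.mem_image.mp hA
          simp
      exact le_trans (Finset.card_le_card Finset.inter_subset_left) hA1
    · have hinj : Function.Injective (fun i : Fin n => ({i} : Finset (Fin n))) :=
        fun a b h => Finset.singleton_injective h
      have hnm : (∅ : Finset (Fin n)) ∉
          Finset.univ.image (fun i : Fin n => ({i} : Finset (Fin n))) := by
        simp only [Finset.mem_image]
        rintro ⟨i, -, h⟩
        exact Finset.singleton_ne_empty i h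
      have h1 : (insert ∅ (Finset.univ.image fun i => ({i} : Finset (Fin n)))).card = n + 1 := by
        rw [Finset.card_insert_of_notMem hnm, Finset.card_image_of_injective _ hinj]
        simp
      rw [h1, Finset.card_powerset]
      simp
  · rintro P ⟨F1, F2, hcross, rfl⟩
    have hfib := Finset.card_eq_sum_card_fiberwise
      (f := fun p : Finset (Fin n) × Finset (Fin n) => p.1 \ p.2 ∪ p.2 \ p.1)
      (s := F1 ×ˢ F2) (t := (Finset.univ : Finset (Fin n)).powerset)
      (fun p _ => Finset.mem_powerset.mpr (Finset.subset_univ _))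
    rw [← Finset.card_product, hfib]
    calc ∑ D ∈ (Finset.univ : Finset (Fin n)).powerset,
          ((F1 ×ˢ F2).filter (fun p => p.1 \ p.2 ∪ p.2 \ p.1 = D)).card
        ≤ ∑ _D ∈ (Finset.univ : Finset (Fin n)).powerset, (n + 1) :=
          Finset.sum_le_sum (fun D _ => fiber_bound F1 F2 hcross D)
      _ = 2 ^ n * (n + 1) := by
          rw [Finset.sum_const, smul_eq_mul, Finset.card_powerset]
          simp
      _ = (n + 1) * 2 ^ n := Nat.mul_comm _ _
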